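/- For every n ≥ 4 there exists a smooth and strictly convex norm ‖·‖ on ℝⁿ and points a₁, a₂, a₃, a₄ ∈ ℝⁿ forming a p-equilateral set (for some p > 0) such that no point a₅ ∈ ℝⁿ satisfies ‖a₅ − aᵢ‖ = p for i = 1, 2, 3, 4. That is, there exists a smooth, strictly convex n-dimensional normed space containing a 4-element equilateral set that is maximal with respect to inclusion. -/

import Mathlib

def IsNorm {n : ℕ} (N : (Fin n → ℝ) → ℝ) : Prop :=
  (∀ x, 0 ≤ N x) ∧ (∀ x, N x = 0 ↔ x = 0) ∧
    (∀ (a : ℝ) x, N (a • x) = |a| * N x) ∧ ∀ x y, N (x + y) ≤ N x + N y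

/-- Every point of the unit sphere lies on exactly one supporting hyperplane of the unit ball. -/
def IsSmoothNorm {n : ℕ} (N : (Fin n → ℝ) → ℝ) : Prop :=
  ∀ x, N x = 1 → ∃! f : (Fin n → ℝ) →ₗ[ℝ] ℝ, f x = 1 ∧ ∀ y, N y ≤ 1 → f y ≤ 1

/-- The unit sphere contains no line segment. -/
def IsStrictlyConvexNorm {n : ℕ} (N : (Fin n → ℝ) → ℝ) : Prop :=
  ∀ x y, N x = 1 → N y = 1 → x ≠ y → N ((1 / 2 : ℝ) • (x + y)) < 1

namespace SSCME

open Finset Real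

variable {n : ℕ}

noncomputable def Qf (w x : Fin n → ℝ) : ℝ := ∑ i, w i * x i ^ 2
noncomputable def Bf (w x y : Fin n → ℝ) : ℝ := ∑ i, w i * x i * y i

lemma Qf_nonneg {w : Fin n → ℝ} (hw : ∀ i, 0 ≤ w i) (x : Fin n → ℝ) : 0 ≤ Qf w x :=
  Finset.sum_nonneg fun i _ => mul_nonneg (hw i) (sq_nonneg _)

lemma Bf_self (w x : Fin n → ℝ) : Bf w x x = Qf w x := by
  unfold Bf Qf; exact Finset.sum_congr rfl fun i _ => by ring

lemma Qf_zero (w : Fin n → ℝ) : Qf w 0 = 0 := by simp [Qf]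

lemma Qf_eq_zero {w : Fin n → ℝ} (hw : ∀ i, 0 < w i) {x : Fin n → ℝ} (h : Qf w x = 0) :
    x = 0 := by
  have hterm : ∀ i ∈ Finset.univ, w i * x i ^ 2 = 0 := by
    rw [← Finset.sum_eq_zero_iff_of_nonneg (fun i _ => mul_nonneg (hw i).le (sq_nonneg _))]
    exact h
  funext i
  have := hterm i (Finset.mem_univ i)
  have hx2 : x i ^ 2 = 0 := by
    rcases mul_eq_zero.mp this with h' | h'
    · exact absurd h' (ne_of_gt (hw i))
    · exact h'
  simpa using pow_eq_zero_iff (n := 2) (by norm_num) |>.mp hx2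

lemma Qf_smul (w : Fin n → ℝ) (a : ℝ) (x : Fin n → ℝ) : Qf w (a • x) = a ^ 2 * Qf w x := by
  unfold Qf
  rw [Finset.mul_sum]
  exact Finset.sum_congr rfl fun i _ => by simp [smul_eq_mul]; ring

lemma Qf_comb (w : Fin n → ℝ) (a b : ℝ) (x y : Fin n → ℝ) :
    Qf w (a • x + b • y) = a ^ 2 * Qf w x + 2 * a * b * Bf w x y + b ^ 2 * Qf w y := by
  unfold Qf Bf
  have : ∀ i : Fin n, w i * (a • x + b • y) i ^ 2
      = a ^ 2 * (w i * x i ^ 2) + 2 * a * b * (w i * x i * y i) + b ^ 2 * (w i * y i ^ 2) := by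
    intro i; simp only [Pi.add_apply, Pi.smul_apply, smul_eq_mul]; ring
  rw [Finset.sum_congr rfl fun i _ => this i]
  rw [Finset.sum_add_distrib, Finset.sum_add_distrib, ← Finset.mul_sum, ← Finset.mul_sum,
    ← Finset.mul_sum]

lemma Qf_add' (w : Fin n → ℝ) (x y : Fin n → ℝ) :
    Qf w (x + y) = Qf w x + 2 * Bf w x y + Qf w y := by
  have := Qf_comb w 1 1 x y
  simpa using this

lemma Bf_sq_le {w : Fin n → ℝ} (hw : ∀ i, 0 ≤ w i) (x y : Fin n → ℝ) :
    Bf w x y ^ 2 ≤ Qf w x * Qf w y := by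
  rcases eq_or_lt_of_le (Qf_nonneg hw y) with h | h
  · have hterm : ∀ i ∈ Finset.univ, w i * y i ^ 2 = 0 := by
      rw [← Finset.sum_eq_zero_iff_of_nonneg (fun i _ => mul_nonneg (hw i) (sq_nonneg _))]
      exact h.symm
    have hB : Bf w x y = 0 := by
      apply Finset.sum_eq_zero
      intro i hi
      have := hterm i hi
      rcases mul_eq_zero.mp this with h' | h'
      · rw [h']; ring
      · have : y i = 0 := by simpa using pow_eq_zero_iff (n := 2) (by norm_num) |>.mp h'
        rw [this]; ring
    rw [hB, ← h]
    simp
  · have key : 0 ≤ Qf w (Qf w y • x + (-(Bf w x y)) • y) := Qf_nonneg hw _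
    rw [Qf_comb] at key
    nlinarith [key, h]

lemma Bf_le {w : Fin n → ℝ} (hw : ∀ i, 0 ≤ w i) (x y : Fin n → ℝ) :
    Bf w x y ≤ √(Qf w x) * √(Qf w y) := by
  calc Bf w x y ≤ |Bf w x y| := le_abs_self _
    _ = √(Bf w x y ^ 2) := (Real.sqrt_sq_eq_abs _).symm
    _ ≤ √(Qf w x * Qf w y) := Real.sqrt_le_sqrt (Bf_sq_le hw x y)
    _ = _ := Real.sqrt_mul (Qf_nonneg hw x) _

noncomputable def Nf (w₁ w₂ : Fin n → ℝ) (x : Fin n → ℝ) : ℝ := √(Qf w₁ x) + √(Qf w₂ x)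

lemma sqrtQ_add_le {w : Fin n → ℝ} (hw : ∀ i, 0 ≤ w i) (x y : Fin n → ℝ) :
    √(Qf w (x + y)) ≤ √(Qf w x) + √(Qf w y) := by
  have hB := Bf_le hw x y
  have h : Qf w (x + y) ≤ (√(Qf w x) + √(Qf w y)) ^ 2 := by
    rw [Qf_add']
    nlinarith [Real.sq_sqrt (Qf_nonneg hw x), Real.sq_sqrt (Qf_nonneg hw y)]
  calc √(Qf w (x + y)) ≤ √((√(Qf w x) + √(Qf w y)) ^ 2) := Real.sqrt_le_sqrt h
    _ = _ := Real.sqrt_sq (by positivity)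

lemma Nf_smul (w₁ w₂ : Fin n → ℝ) (a : ℝ) (x : Fin n → ℝ) :
    Nf w₁ w₂ (a • x) = |a| * Nf w₁ w₂ x := by
  unfold Nf
  rw [Qf_smul, Qf_smul, Real.sqrt_mul (sq_nonneg a), Real.sqrt_mul (sq_nonneg a),
    Real.sqrt_sq_eq_abs]
  ring

variable {w₁ w₂ : Fin n → ℝ}

lemma Nf_isNorm (hw₁ : ∀ i, 0 < w₁ i) (hw₂ : ∀ i, 0 < w₂ i) : IsNorm (Nf w₁ w₂) := by
  refine ⟨fun x => add_nonneg (Real.sqrt_nonneg _) (Real.sqrt_nonneg _), fun x => ?_, Nf_smul w₁ w₂, fun x y => ?_⟩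
  · constructor
    · intro h
      have h1 : √(Qf w₁ x) = 0 := by
        have := Real.sqrt_nonneg (Qf w₁ x); have := Real.sqrt_nonneg (Qf w₂ x)
        unfold Nf at h; linarith
      exact Qf_eq_zero hw₁ ((Real.sqrt_eq_zero (Qf_nonneg (fun i => (hw₁ i).le) x)).mp h1)
    · rintro rfl; unfold Nf; rw [Qf_zero, Qf_zero]; simp
  · unfold Nf
    have t1 := sqrtQ_add_le (fun i => (hw₁ i).le) x y
    have t2 := sqrtQ_add_le (fun i => (hw₂ i).le) x y
    linarith

lemma Nf_strict (hw₁ : ∀ i, 0 < w₁ i) (hw₂ : ∀ i, 0 < w₂ i) :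
    IsStrictlyConvexNorm (Nf w₁ w₂) := by
  intro x y hx hy hne
  set m : Fin n → ℝ := (1 / 2 : ℝ) • (x + y) with hm
  have key : ∀ w : Fin n → ℝ, (∀ i, 0 ≤ w i) →
      √(Qf w m) ≤ (√(Qf w x) + √(Qf w y)) / 2 := by
    intro w hw
    have h1 : Qf w m = (Qf w x + 2 * Bf w x y + Qf w y) / 4 := by
      rw [hm, Qf_smul, Qf_add']; ring
    have hB := Bf_le hw x y
    have h2 : Qf w m ≤ ((√(Qf w x) + √(Qf w y)) / 2) ^ 2 := by
      rw [h1]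
      nlinarith [Real.sq_sqrt (Qf_nonneg hw x), Real.sq_sqrt (Qf_nonneg hw y)]
    calc √(Qf w m) ≤ √(((√(Qf w x) + √(Qf w y)) / 2) ^ 2) := Real.sqrt_le_sqrt h2
      _ = _ := Real.sqrt_sq (by positivity)
  by_contra hcon
  push_neg at hcon
  have hle : Nf w₁ w₂ m ≤ 1 := by
    have k1 := key w₁ fun i => (hw₁ i).le
    have k2 := key w₂ fun i => (hw₂ i).le
    unfold Nf at *; linarith
  have heq : Nf w₁ w₂ m = 1 := le_antisymm hle hcon
  -- equality in the w₁ component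
  have k1 := key w₁ fun i => (hw₁ i).le
  have k2 := key w₂ fun i => (hw₂ i).le
  have e1 : √(Qf w₁ m) = (√(Qf w₁ x) + √(Qf w₁ y)) / 2 := by
    unfold Nf at heq hx hy; linarith
  have hx0 : x ≠ 0 := by
    rintro rfl
    rw [show Nf w₁ w₂ 0 = 0 by unfold Nf; rw [Qf_zero, Qf_zero]; simp] at hx
    norm_num at hx
  have hy0 : y ≠ 0 := by
    rintro rfl
    rw [show Nf w₁ w₂ 0 = 0 by unfold Nf; rw [Qf_zero, Qf_zero]; simp] at hy
    norm_num at hy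
  have hQx : 0 < Qf w₁ x := by
    rcases eq_or_lt_of_le (Qf_nonneg (fun i => (hw₁ i).le) x) with h | h
    · exact absurd (Qf_eq_zero hw₁ h.symm) hx0
    · exact h
  have hQy : 0 < Qf w₁ y := by
    rcases eq_or_lt_of_le (Qf_nonneg (fun i => (hw₁ i).le) y) with h | h
    · exact absurd (Qf_eq_zero hw₁ h.symm) hy0
    · exact h
  -- derive Bf = sqrt * sqrt
  have hBf : Bf w₁ x y = √(Qf w₁ x) * √(Qf w₁ y) := by
    have h1 : Qf w₁ m = (Qf w₁ x + 2 * Bf w₁ x y + Qf w₁ y) / 4 := by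
      rw [hm, Qf_smul, Qf_add']; ring
    have h2 : Qf w₁ m = ((√(Qf w₁ x) + √(Qf w₁ y)) / 2) ^ 2 := by
      rw [← e1, Real.sq_sqrt (Qf_nonneg (fun i => (hw₁ i).le) m)]
    nlinarith [Real.sq_sqrt (Qf_nonneg (fun i => (hw₁ i).le) x),
      Real.sq_sqrt (Qf_nonneg (fun i => (hw₁ i).le) y), h1, h2]
  -- z = sqrt(Qy) • x - sqrt(Qx) • y is Q-null
  have hz : (√(Qf w₁ y) • x + (-(√(Qf w₁ x))) • y) = 0 := by
    apply Qf_eq_zero hw₁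
    rw [Qf_comb]
    have sx := Real.sq_sqrt hQx.le
    have sy := Real.sq_sqrt hQy.le
    rw [hBf]
    ring_nf
    nlinarith [sx, sy]
  have hyx : y = (√(Qf w₁ y) / √(Qf w₁ x)) • x := by
    have hsx : (0:ℝ) < √(Qf w₁ x) := Real.sqrt_pos.mpr hQx
    funext i
    have := congrFun hz i
    simp only [Pi.add_apply, Pi.smul_apply, smul_eq_mul, Pi.neg_apply, Pi.zero_apply] at this ⊢
    field_simp
    linarith [this]
  set t : ℝ := √(Qf w₁ y) / √(Qf w₁ x) with ht
  have htpos : 0 < t := div_pos (Real.sqrt_pos.mpr hQy) (Real.sqrt_pos.mpr hQx)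
  have : Nf w₁ w₂ y = t := by
    rw [hyx, Nf_smul, hx, abs_of_pos htpos]; ring
  have ht1 : t = 1 := by rw [← this, hy]
  apply hne
  rw [hyx, ht1, one_smul]


noncomputable def dotL (c : Fin n → ℝ) : (Fin n → ℝ) →ₗ[ℝ] ℝ where
  toFun := fun y => ∑ i, c i * y i
  map_add' := fun y z => by
    simp only [Pi.add_apply, mul_add, Finset.sum_add_distrib]
  map_smul' := fun a y => by
    simp only [Pi.smul_apply, smul_eq_mul, RingHom.id_apply, Finset.mul_sum]
    exact Finset.sum_congr rfl fun i _ => by ring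

lemma Nf_smooth (hw₁ : ∀ i, 0 < w₁ i) (hw₂ : ∀ i, 0 < w₂ i) :
    IsSmoothNorm (Nf w₁ w₂) := by
  intro x hx
  have hx0 : x ≠ 0 := by
    rintro rfl
    rw [show Nf w₁ w₂ 0 = 0 by unfold Nf; rw [Qf_zero, Qf_zero]; simp] at hx
    norm_num at hx
  have hQ1 : 0 < Qf w₁ x := by
    rcases eq_or_lt_of_le (Qf_nonneg (fun i => (hw₁ i).le) x) with h | h
    · exact absurd (Qf_eq_zero hw₁ h.symm) hx0
    · exact h
  have hQ2 : 0 < Qf w₂ x := by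
    rcases eq_or_lt_of_le (Qf_nonneg (fun i => (hw₂ i).le) x) with h | h
    · exact absurd (Qf_eq_zero hw₂ h.symm) hx0
    · exact h
  have hs1 : (0:ℝ) < √(Qf w₁ x) := Real.sqrt_pos.mpr hQ1
  have hs2 : (0:ℝ) < √(Qf w₂ x) := Real.sqrt_pos.mpr hQ2
  set F : (Fin n → ℝ) →ₗ[ℝ] ℝ :=
    dotL (fun i => w₁ i * x i / √(Qf w₁ x) + w₂ i * x i / √(Qf w₂ x)) with hF
  have hFapp : ∀ y, F y = Bf w₁ x y / √(Qf w₁ x) + Bf w₂ x y / √(Qf w₂ x) := by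
    intro y
    show (∑ i, (w₁ i * x i / √(Qf w₁ x) + w₂ i * x i / √(Qf w₂ x)) * y i) = _
    rw [Bf, Bf, Finset.sum_div, Finset.sum_div, ← Finset.sum_add_distrib]
    exact Finset.sum_congr rfl fun i _ => by ring
  -- the derivative of t ↦ Nf (x + t • y) at 0 is F y
  have hNd : ∀ y : Fin n → ℝ,
      HasDerivAt (fun t : ℝ => Nf w₁ w₂ (x + t • y)) (F y) 0 := by
    intro y
    have sqrtpart : ∀ w : Fin n → ℝ, 0 < Qf w x →
        HasDerivAt (fun t : ℝ => √(Qf w (x + t • y))) (Bf w x y / √(Qf w x)) 0 := by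
      intro w hQ
      have hpoly : ∀ t : ℝ, Qf w (x + t • y)
          = Qf w x + (2 * Bf w x y) * t + Qf w y * t ^ 2 := by
        intro t
        have h := Qf_comb w 1 t x y
        rw [one_smul] at h
        rw [h]; ring
      have hq : HasDerivAt (fun t : ℝ => Qf w x + (2 * Bf w x y) * t + Qf w y * t ^ 2)
          (2 * Bf w x y) 0 := by
        have h1 : HasDerivAt (fun t : ℝ => (2 * Bf w x y) * t) (2 * Bf w x y) 0 := by
          simpa using (hasDerivAt_id (0:ℝ)).const_mul (2 * Bf w x y)
        have h2 : HasDerivAt (fun t : ℝ => Qf w y * t ^ 2) 0 0 := by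
          simpa using (hasDerivAt_pow 2 (0:ℝ)).const_mul (Qf w y)
        have := (h1.add h2).const_add (Qf w x)
        simpa [add_assoc] using this
      have h0 : (Qf w x + (2 * Bf w x y) * 0 + Qf w y * 0 ^ 2) = Qf w x := by ring
      have hsq : HasDerivAt Real.sqrt (1 / (2 * √(Qf w x)))
          (Qf w x + (2 * Bf w x y) * 0 + Qf w y * 0 ^ 2) := by
        rw [h0]; exact Real.hasDerivAt_sqrt (ne_of_gt hQ)
      have hcomp := hsq.comp 0 hq
      have hfun : (Real.sqrt ∘ fun t : ℝ => Qf w x + (2 * Bf w x y) * t + Qf w y * t ^ 2)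
          = fun t : ℝ => √(Qf w (x + t • y)) := by
        funext t
        simp only [Function.comp_apply, hpoly t]
      rw [hfun] at hcomp
      refine hcomp.congr_deriv ?_
      have : (0:ℝ) < √(Qf w x) := Real.sqrt_pos.mpr hQ
      ring
    have d1 := sqrtpart w₁ hQ1
    have d2 := sqrtpart w₂ hQ2
    have := d1.add d2
    rw [hFapp y]
    exact this
  refine ⟨F, ⟨?_, ?_⟩, ?_⟩
  · rw [hFapp, Bf_self, Bf_self, Real.div_sqrt, Real.div_sqrt]
    exact hx
  · intro y hy
    have b1 : Bf w₁ x y / √(Qf w₁ x) ≤ √(Qf w₁ y) := by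
      rw [div_le_iff₀ hs1]
      calc Bf w₁ x y ≤ √(Qf w₁ x) * √(Qf w₁ y) := Bf_le (fun i => (hw₁ i).le) x y
        _ = √(Qf w₁ y) * √(Qf w₁ x) := mul_comm _ _
    have b2 : Bf w₂ x y / √(Qf w₂ x) ≤ √(Qf w₂ y) := by
      rw [div_le_iff₀ hs2]
      calc Bf w₂ x y ≤ √(Qf w₂ x) * √(Qf w₂ y) := Bf_le (fun i => (hw₂ i).le) x y
        _ = √(Qf w₂ y) * √(Qf w₂ x) := mul_comm _ _
    rw [hFapp]
    unfold Nf at hy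
    linarith
  · rintro g ⟨hgx, hgb⟩
    have hgle : ∀ z, g z ≤ Nf w₁ w₂ z := by
      intro z
      rcases eq_or_ne (Nf w₁ w₂ z) 0 with h0 | h0
      · have hz : z = 0 := ((Nf_isNorm hw₁ hw₂).2.1 z).mp h0
        subst hz
        rw [h0, map_zero]
      · have hpos : 0 < Nf w₁ w₂ z :=
          lt_of_le_of_ne ((Nf_isNorm hw₁ hw₂).1 z) (Ne.symm h0)
        have h1 : Nf w₁ w₂ ((Nf w₁ w₂ z)⁻¹ • z) = 1 := by
          rw [Nf_smul, abs_of_pos (inv_pos.mpr hpos), inv_mul_cancel₀ (ne_of_gt hpos)]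
        have h2 := hgb _ (le_of_eq h1)
        rw [map_smul] at h2
        simp only [smul_eq_mul] at h2
        calc g z = Nf w₁ w₂ z * ((Nf w₁ w₂ z)⁻¹ * g z) := by field_simp
          _ ≤ Nf w₁ w₂ z * 1 := mul_le_mul_of_nonneg_left h2 hpos.le
          _ = Nf w₁ w₂ z := mul_one _
    apply LinearMap.ext
    intro y
    have hψ : HasDerivAt (fun t : ℝ => Nf w₁ w₂ (x + t • y) - (1 + t * g y))
        (F y - g y) 0 := by
      have hlin : HasDerivAt (fun t : ℝ => 1 + t * g y) (g y) 0 := by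
        simpa using ((hasDerivAt_id (0:ℝ)).mul_const (g y)).const_add 1
      exact (hNd y).sub hlin
    have hmin : IsLocalMin (fun t : ℝ => Nf w₁ w₂ (x + t • y) - (1 + t * g y)) 0 := by
      refine Filter.Eventually.of_forall fun t => ?_
      show Nf w₁ w₂ (x + (0:ℝ) • y) - (1 + 0 * g y) ≤ Nf w₁ w₂ (x + t • y) - (1 + t * g y)
      have hgz : g (x + t • y) = 1 + t * g y := by
        rw [map_add, map_smul, hgx]
        simp [smul_eq_mul]
      have hb := hgle (x + t • y)
      have h00 : Nf w₁ w₂ (x + (0:ℝ) • y) = 1 := by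
        rw [zero_smul, add_zero, hx]
      rw [h00]
      linarith [hgz ▸ hb]
    have hzero := hmin.hasDerivAt_eq_zero hψ
    linarith [hzero]

-- ## Concrete construction

lemma sum_val_three (hn : 3 ≤ n) (F : ℕ → ℝ) (hF : ∀ k, 3 ≤ k → F k = 0) :
    ∑ i : Fin n, F i.val = F 0 + F 1 + F 2 := by
  rw [Fin.sum_univ_eq_sum_range F n]
  rw [← Finset.sum_subset (Finset.range_subset_range.mpr hn)
      (fun k hk hk3 => hF k (by simp only [Finset.mem_range] at hk3 ⊢; omega))]
  simp [Finset.sum_range_succ]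

lemma Qf_val (hn : 3 ≤ n) (c0 c1 cW : ℝ) (g : ℕ → ℝ) (hg : ∀ k, 3 ≤ k → g k = 0) :
    Qf (fun i : Fin n => if i.val = 0 then c0 else if i.val = 1 then c1 else cW)
      (fun i : Fin n => g i.val)
      = c0 * g 0 ^ 2 + c1 * g 1 ^ 2 + cW * g 2 ^ 2 := by
  unfold Qf
  have h := sum_val_three hn
    (fun k => (if k = 0 then c0 else if k = 1 then c1 else cW) * g k ^ 2)
    (fun k hk => by rw [hg k hk]; ring)
  calc (∑ i : Fin n, (if (i : ℕ) = 0 then c0 else if (i : ℕ) = 1 then c1 else cW)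
          * (g i.val) ^ 2)
      = ∑ i : Fin n,
          (fun k => (if k = 0 then c0 else if k = 1 then c1 else cW) * g k ^ 2) i.val :=
        Finset.sum_congr rfl fun i _ => rfl
    _ = _ := by rw [h]; norm_num

noncomputable def Rf (z : Fin n → ℝ) : ℝ := ∑ i, if 2 ≤ i.val then z i ^ 2 else 0

lemma Rf_nonneg (z : Fin n → ℝ) : 0 ≤ Rf z :=
  Finset.sum_nonneg fun i _ => by split_ifs; exacts [sq_nonneg _, le_rfl]

lemma Rf_congr {z z' : Fin n → ℝ} (h : ∀ i : Fin n, 2 ≤ i.val → z i = z' i) :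
    Rf z = Rf z' :=
  Finset.sum_congr rfl fun i _ => by
    by_cases h2 : 2 ≤ i.val
    · rw [if_pos h2, if_pos h2, h i h2]
    · rw [if_neg h2, if_neg h2]

lemma sq_le_Rf (z : Fin n → ℝ) (i2 : Fin n) (h2 : (i2 : ℕ) = 2) : z i2 ^ 2 ≤ Rf z := by
  have he : (if 2 ≤ (i2 : ℕ) then z i2 ^ 2 else 0) = z i2 ^ 2 := by rw [if_pos (by omega)]
  calc z i2 ^ 2 = _ := he.symm
    _ ≤ Rf z := Finset.single_le_sum
        (f := fun i : Fin n => if 2 ≤ (i : ℕ) then z i ^ 2 else 0)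
        (fun i _ => by split_ifs; exacts [sq_nonneg _, le_rfl])
        (Finset.mem_univ i2)

lemma Qf_split (c0 c1 cW : ℝ) (z : Fin n → ℝ) (i0 i1 : Fin n)
    (h0 : (i0 : ℕ) = 0) (h1 : (i1 : ℕ) = 1) :
    Qf (fun i : Fin n => if i.val = 0 then c0 else if i.val = 1 then c1 else cW) z
      = c0 * z i0 ^ 2 + c1 * z i1 ^ 2 + cW * Rf z := by
  unfold Qf Rf
  have key : ∀ i : Fin n,
      (if (i : ℕ) = 0 then c0 else if (i : ℕ) = 1 then c1 else cW) * z i ^ 2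
      = (if i = i0 then c0 * z i ^ 2 else 0) + (if i = i1 then c1 * z i ^ 2 else 0)
        + cW * (if 2 ≤ (i : ℕ) then z i ^ 2 else 0) := by
    intro i
    have e0 : (i = i0) ↔ ((i : ℕ) = 0) :=
      ⟨fun h => h ▸ h0, fun h => Fin.ext (by rw [h, h0])⟩
    have e1 : (i = i1) ↔ ((i : ℕ) = 1) :=
      ⟨fun h => h ▸ h1, fun h => Fin.ext (by rw [h, h1])⟩
    rcases Nat.lt_or_ge (i : ℕ) 2 with hlt | hge
    · have : (i : ℕ) = 0 ∨ (i : ℕ) = 1 := by omega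
      rcases this with h | h
      · rw [if_pos h, if_pos (e0.mpr h), if_neg (fun hc => by rw [e1] at hc; omega),
          if_neg (by omega)]
        ring
      · rw [if_neg (by omega), if_pos h, if_neg (fun hc => by rw [e0] at hc; omega),
          if_pos (e1.mpr h), if_neg (by omega)]
        ring
    · rw [if_neg (by omega), if_neg (by omega),
        if_neg (fun hc => by rw [e0] at hc; omega),
        if_neg (fun hc => by rw [e1] at hc; omega), if_pos hge]
      ring
  rw [Finset.sum_congr rfl fun i _ => key i]
  rw [Finset.sum_add_distrib, Finset.sum_add_distrib,
    Finset.sum_ite_eq' Finset.univ i0 (fun i => c0 * z i ^ 2),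
    Finset.sum_ite_eq' Finset.univ i1 (fun i => c1 * z i ^ 2), ← Finset.mul_sum]
  simp [Finset.mem_univ]

lemma Rf_shift (z : Fin n → ℝ) (i2 : Fin n) (h2 : (i2 : ℕ) = 2) (d : Fin n → ℝ)
    (hd : ∀ i : Fin n, d i = if (i : ℕ) = 2 then 1 else 0) :
    Rf (z - d) = Rf z - 2 * z i2 + 1 := by
  unfold Rf
  have key : ∀ i : Fin n, (if 2 ≤ (i : ℕ) then (z - d) i ^ 2 else 0)
      = (if 2 ≤ (i : ℕ) then z i ^ 2 else 0) + (if i = i2 then -2 * z i + 1 else 0) := by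
    intro i
    have e2 : (i = i2) ↔ ((i : ℕ) = 2) :=
      ⟨fun h => h ▸ h2, fun h => Fin.ext (by rw [h, h2])⟩
    by_cases hc : (i : ℕ) = 2
    · rw [if_pos (by omega), if_pos (by omega), if_pos (e2.mpr hc)]
      simp only [Pi.sub_apply, hd i, if_pos hc]
      ring
    · rw [if_neg (fun h => hc (e2.mp h))]
      by_cases hge : 2 ≤ (i : ℕ)
      · rw [if_pos hge, if_pos hge]
        simp only [Pi.sub_apply, hd i, if_neg hc]
        ring
      · rw [if_neg hge, if_neg hge]; ring
  rw [Finset.sum_congr rfl fun i _ => key i, Finset.sum_add_distrib,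
    Finset.sum_ite_eq' Finset.univ i2 (fun i => -2 * z i + 1)]
  simp only [Finset.mem_univ, if_pos]
  ring

lemma mono_pair3 {k1 k2 u v c1 c2 : ℝ} (hk1 : 0 < k1) (hk2 : 0 < k2)
    (hc1 : 0 ≤ c1) (hc2 : 0 ≤ c2) (hu : 0 ≤ u) (hv : 0 ≤ v)
    (h : √(k1 * u + c1) + √(k2 * u + c2) = √(k1 * v + c1) + √(k2 * v + c2)) : u = v := by
  rcases lt_trichotomy u v with hlt | he | hgt
  · exfalso
    have s1 : √(k1 * u + c1) < √(k1 * v + c1) :=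
      Real.sqrt_lt_sqrt (by positivity) (by nlinarith)
    have s2 : √(k2 * u + c2) < √(k2 * v + c2) :=
      Real.sqrt_lt_sqrt (by positivity) (by nlinarith)
    linarith
  · exact he
  · exfalso
    have s1 : √(k1 * v + c1) < √(k1 * u + c1) :=
      Real.sqrt_lt_sqrt (by positivity) (by nlinarith)
    have s2 : √(k2 * v + c2) < √(k2 * u + c2) :=
      Real.sqrt_lt_sqrt (by positivity) (by nlinarith)
    linarith

noncomputable def wA (n : ℕ) : Fin n → ℝ :=
  fun i => if i.val = 0 then 1/16 else if i.val = 1 then 4225/16 else 240079/40000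
noncomputable def wB (n : ℕ) : Fin n → ℝ :=
  fun i => if i.val = 0 then 64 else if i.val = 1 then 1/16 else 5779/40000
noncomputable def ptA (n : ℕ) : Fin n → ℝ := fun i => if i.val = 0 then 1 else 0
noncomputable def ptB (n : ℕ) : Fin n → ℝ := fun i => if i.val = 0 then -1 else 0
noncomputable def ptC (n : ℕ) : Fin n → ℝ :=
  fun i => if i.val = 1 then 1/2 else if i.val = 2 then 1 else 0
noncomputable def ptD (n : ℕ) : Fin n → ℝ :=
  fun i => if i.val = 1 then -(1/2) else if i.val = 2 then 1 else 0

lemma wA_pos (n : ℕ) : ∀ i, 0 < wA n i := fun i => by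
  unfold wA; split_ifs <;> norm_num

lemma wB_pos (n : ℕ) : ∀ i, 0 < wB n i := fun i => by
  unfold wB; split_ifs <;> norm_num

lemma Nf_pts (hn : 3 ≤ n) (g : ℕ → ℝ) (hg : ∀ k, 3 ≤ k → g k = 0) (u v : ℝ)
    (hu : 0 ≤ u) (hv : 0 ≤ v)
    (h1 : (1/16) * g 0 ^ 2 + (4225/16) * g 1 ^ 2 + (240079/40000) * g 2 ^ 2 = u ^ 2)
    (h2 : 64 * g 0 ^ 2 + (1/16) * g 1 ^ 2 + (5779/40000) * g 2 ^ 2 = v ^ 2) :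
    Nf (wA n) (wB n) (fun i : Fin n => g i.val) = u + v := by
  unfold Nf wA wB
  rw [Qf_val hn _ _ _ g hg, Qf_val hn _ _ _ g hg, h1, h2,
    Real.sqrt_sq hu, Real.sqrt_sq hv]

end SSCME


set_option maxHeartbeats 2000000 in
theorem smooth_strictly_convex_maximal_equilateral (n : ℕ) (hn : 4 ≤ n) :
    ∃ N : (Fin n → ℝ) → ℝ, IsNorm N ∧ IsSmoothNorm N ∧ IsStrictlyConvexNorm N ∧
      ∃ (a₁ a₂ a₃ a₄ : Fin n → ℝ) (p : ℝ), 0 < p ∧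
        N (a₁ - a₂) = p ∧ N (a₁ - a₃) = p ∧ N (a₁ - a₄) = p ∧
        N (a₂ - a₃) = p ∧ N (a₂ - a₄) = p ∧ N (a₃ - a₄) = p ∧
        ¬ ∃ a₅ : Fin n → ℝ, N (a₅ - a₁) = p ∧ N (a₅ - a₂) = p ∧
          N (a₅ - a₃) = p ∧ N (a₅ - a₄) = p := by
  have h3 : 3 ≤ n := by omega
  have hwA := SSCME.wA_pos n
  have hwB := SSCME.wB_pos n
  refine ⟨SSCME.Nf (SSCME.wA n) (SSCME.wB n),
    SSCME.Nf_isNorm hwA hwB, SSCME.Nf_smooth hwA hwB, SSCME.Nf_strict hwA hwB,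
    SSCME.ptA n, SSCME.ptB n, SSCME.ptC n, SSCME.ptD n, 33/2, by norm_num,
    ?_, ?_, ?_, ?_, ?_, ?_, ?_⟩
  · -- A - B
    have hdiff : SSCME.ptA n - SSCME.ptB n
        = (fun i : Fin n => (fun k : ℕ => (if k = 0 then (1:ℝ) else 0) - (if k = 0 then (-1:ℝ) else 0)) i.val) := rfl
    rw [hdiff]
    refine (SSCME.Nf_pts h3 (fun k : ℕ => (if k = 0 then (1:ℝ) else 0) - (if k = 0 then (-1:ℝ) else 0))
      (fun k hk => by
        have h0 : k ≠ 0 := by omega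
        simp [h0])
      (1/2) (16) (by norm_num) (by norm_num) (by norm_num) (by norm_num)).trans ?_
    norm_num
  · -- A - C
    have hdiff : SSCME.ptA n - SSCME.ptC n
        = (fun i : Fin n => (fun k : ℕ => (if k = 0 then (1:ℝ) else 0) - (if k = 1 then (1/2:ℝ) else if k = 2 then 1 else 0)) i.val) := rfl
    rw [hdiff]
    refine (SSCME.Nf_pts h3 (fun k : ℕ => (if k = 0 then (1:ℝ) else 0) - (if k = 1 then (1/2:ℝ) else if k = 2 then 1 else 0))
      (fun k hk => by
        have h0 : k ≠ 0 := by omega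
        have h1 : k ≠ 1 := by omega
        have h2 : k ≠ 2 := by omega
        simp [h0, h1, h2])
      (849/100) (801/100) (by norm_num) (by norm_num) (by norm_num) (by norm_num)).trans ?_
    norm_num
  · -- A - D
    have hdiff : SSCME.ptA n - SSCME.ptD n
        = (fun i : Fin n => (fun k : ℕ => (if k = 0 then (1:ℝ) else 0) - (if k = 1 then (-(1/2):ℝ) else if k = 2 then 1 else 0)) i.val) := rfl
    rw [hdiff]
    refine (SSCME.Nf_pts h3 (fun k : ℕ => (if k = 0 then (1:ℝ) else 0) - (if k = 1 then (-(1/2):ℝ) else if k = 2 then 1 else 0))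
      (fun k hk => by
        have h0 : k ≠ 0 := by omega
        have h1 : k ≠ 1 := by omega
        have h2 : k ≠ 2 := by omega
        simp [h0, h1, h2])
      (849/100) (801/100) (by norm_num) (by norm_num) (by norm_num) (by norm_num)).trans ?_
    norm_num
  · -- B - C
    have hdiff : SSCME.ptB n - SSCME.ptC n
        = (fun i : Fin n => (fun k : ℕ => (if k = 0 then (-1:ℝ) else 0) - (if k = 1 then (1/2:ℝ) else if k = 2 then 1 else 0)) i.val) := rfl
    rw [hdiff]
    refine (SSCME.Nf_pts h3 (fun k : ℕ => (if k = 0 then (-1:ℝ) else 0) - (if k = 1 then (1/2:ℝ) else if k = 2 then 1 else 0))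
      (fun k hk => by
        have h0 : k ≠ 0 := by omega
        have h1 : k ≠ 1 := by omega
        have h2 : k ≠ 2 := by omega
        simp [h0, h1, h2])
      (849/100) (801/100) (by norm_num) (by norm_num) (by norm_num) (by norm_num)).trans ?_
    norm_num
  · -- B - D
    have hdiff : SSCME.ptB n - SSCME.ptD n
        = (fun i : Fin n => (fun k : ℕ => (if k = 0 then (-1:ℝ) else 0) - (if k = 1 then (-(1/2):ℝ) else if k = 2 then 1 else 0)) i.val) := rfl
    rw [hdiff]
    refine (SSCME.Nf_pts h3 (fun k : ℕ => (if k = 0 then (-1:ℝ) else 0) - (if k = 1 then (-(1/2):ℝ) else if k = 2 then 1 else 0))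
      (fun k hk => by
        have h0 : k ≠ 0 := by omega
        have h1 : k ≠ 1 := by omega
        have h2 : k ≠ 2 := by omega
        simp [h0, h1, h2])
      (849/100) (801/100) (by norm_num) (by norm_num) (by norm_num) (by norm_num)).trans ?_
    norm_num
  · -- C - D
    have hdiff : SSCME.ptC n - SSCME.ptD n
        = (fun i : Fin n => (fun k : ℕ => (if k = 1 then (1/2:ℝ) else if k = 2 then 1 else 0) - (if k = 1 then (-(1/2):ℝ) else if k = 2 then 1 else 0)) i.val) := rfl
    rw [hdiff]
    refine (SSCME.Nf_pts h3 (fun k : ℕ => (if k = 1 then (1/2:ℝ) else if k = 2 then 1 else 0) - (if k = 1 then (-(1/2):ℝ) else if k = 2 then 1 else 0))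
      (fun k hk => by
        have h1 : k ≠ 1 := by omega
        have h2 : k ≠ 2 := by omega
        simp [h1, h2])
      (65/4) (1/4) (by norm_num) (by norm_num) (by norm_num) (by norm_num)).trans ?_
    norm_num
  · -- no fifth equidistant point
    rintro ⟨x, hx1, hx2, hx3, hx4⟩
    have hn0 : 0 < n := by omega
    have hn1 : 1 < n := by omega
    have hn2 : 2 < n := by omega
    let i0 : Fin n := ⟨0, hn0⟩
    let i1 : Fin n := ⟨1, hn1⟩
    let i2 : Fin n := ⟨2, hn2⟩
    have hQA : ∀ z : Fin n → ℝ, SSCME.Qf (SSCME.wA n) z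
        = 1/16 * z i0 ^ 2 + 4225/16 * z i1 ^ 2 + 240079/40000 * SSCME.Rf z := by
      intro z
      unfold SSCME.wA
      exact SSCME.Qf_split _ _ _ z i0 i1 rfl rfl
    have hQB : ∀ z : Fin n → ℝ, SSCME.Qf (SSCME.wB n) z
        = 64 * z i0 ^ 2 + 1/16 * z i1 ^ 2 + 5779/40000 * SSCME.Rf z := by
      intro z
      unfold SSCME.wB
      exact SSCME.Qf_split _ _ _ z i0 i1 rfl rfl
    have unfoldN : ∀ pt : Fin n → ℝ, SSCME.Nf (SSCME.wA n) (SSCME.wB n) (x - pt)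
        = √(1/16 * (x i0 - pt i0) ^ 2 + 4225/16 * (x i1 - pt i1) ^ 2
            + 240079/40000 * SSCME.Rf (x - pt))
          + √(64 * (x i0 - pt i0) ^ 2 + 1/16 * (x i1 - pt i1) ^ 2
            + 5779/40000 * SSCME.Rf (x - pt)) := by
      intro pt
      unfold SSCME.Nf
      rw [hQA, hQB]
      simp only [Pi.sub_apply]
    rw [unfoldN] at hx1 hx2 hx3 hx4
    have hS0 : 0 ≤ SSCME.Rf x := SSCME.Rf_nonneg x
    have hRA : SSCME.Rf (x - SSCME.ptA n) = SSCME.Rf x :=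
      SSCME.Rf_congr fun i hi => by
        have h0 : (i : ℕ) ≠ 0 := by omega
        simp [SSCME.ptA, h0]
    have hRB : SSCME.Rf (x - SSCME.ptB n) = SSCME.Rf x :=
      SSCME.Rf_congr fun i hi => by
        have h0 : (i : ℕ) ≠ 0 := by omega
        simp [SSCME.ptB, h0]
    have hRC : SSCME.Rf (x - SSCME.ptC n) = SSCME.Rf x - 2 * x i2 + 1 := by
      have h1 : SSCME.Rf (x - SSCME.ptC n)
          = SSCME.Rf (x - fun j : Fin n => if (j : ℕ) = 2 then (1:ℝ) else 0) :=
        SSCME.Rf_congr fun i hi => by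
          have hne : (i : ℕ) ≠ 1 := by omega
          simp [SSCME.ptC, hne]
      rw [h1, SSCME.Rf_shift x i2 rfl _ (fun i => rfl)]
    have hRD : SSCME.Rf (x - SSCME.ptD n) = SSCME.Rf x - 2 * x i2 + 1 := by
      have h1 : SSCME.Rf (x - SSCME.ptD n)
          = SSCME.Rf (x - fun j : Fin n => if (j : ℕ) = 2 then (1:ℝ) else 0) :=
        SSCME.Rf_congr fun i hi => by
          have hne : (i : ℕ) ≠ 1 := by omega
          simp [SSCME.ptD, hne]
      rw [h1, SSCME.Rf_shift x i2 rfl _ (fun i => rfl)]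
    have eA0 : SSCME.ptA n i0 = 1 := rfl
    have eA1 : SSCME.ptA n i1 = 0 := rfl
    have eB0 : SSCME.ptB n i0 = -1 := rfl
    have eB1 : SSCME.ptB n i1 = 0 := rfl
    have eC0 : SSCME.ptC n i0 = 0 := rfl
    have eC1 : SSCME.ptC n i1 = 1/2 := rfl
    have eD0 : SSCME.ptD n i0 = 0 := rfl
    have eD1 : SSCME.ptD n i1 = -(1/2) := rfl
    have hT0 : 0 ≤ SSCME.Rf x - 2 * x i2 + 1 := hRC ▸ SSCME.Rf_nonneg _
    -- rewritten distance equations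
    have hx1' : √(1/16 * ((x i0 - 1) ^ 2)
          + (4225/16 * x i1 ^ 2 + 240079/40000 * SSCME.Rf x))
        + √(64 * ((x i0 - 1) ^ 2)
          + (1/16 * x i1 ^ 2 + 5779/40000 * SSCME.Rf x)) = 33/2 := by
      rw [show (1/16 * ((x i0 - 1) ^ 2)
            + (4225/16 * x i1 ^ 2 + 240079/40000 * SSCME.Rf x) : ℝ)
          = 1/16 * (x i0 - SSCME.ptA n i0) ^ 2 + 4225/16 * (x i1 - SSCME.ptA n i1) ^ 2
            + 240079/40000 * SSCME.Rf (x - SSCME.ptA n) from by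
            rw [eA0, eA1, hRA]; ring,
        show (64 * ((x i0 - 1) ^ 2) + (1/16 * x i1 ^ 2 + 5779/40000 * SSCME.Rf x) : ℝ)
          = 64 * (x i0 - SSCME.ptA n i0) ^ 2 + 1/16 * (x i1 - SSCME.ptA n i1) ^ 2
            + 5779/40000 * SSCME.Rf (x - SSCME.ptA n) from by
            rw [eA0, eA1, hRA]; ring]
      exact hx1
    have hx2' : √(1/16 * ((x i0 + 1) ^ 2)
          + (4225/16 * x i1 ^ 2 + 240079/40000 * SSCME.Rf x))
        + √(64 * ((x i0 + 1) ^ 2)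
          + (1/16 * x i1 ^ 2 + 5779/40000 * SSCME.Rf x)) = 33/2 := by
      rw [show (1/16 * ((x i0 + 1) ^ 2)
            + (4225/16 * x i1 ^ 2 + 240079/40000 * SSCME.Rf x) : ℝ)
          = 1/16 * (x i0 - SSCME.ptB n i0) ^ 2 + 4225/16 * (x i1 - SSCME.ptB n i1) ^ 2
            + 240079/40000 * SSCME.Rf (x - SSCME.ptB n) from by
            rw [eB0, eB1, hRB]; ring,
        show (64 * ((x i0 + 1) ^ 2) + (1/16 * x i1 ^ 2 + 5779/40000 * SSCME.Rf x) : ℝ)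
          = 64 * (x i0 - SSCME.ptB n i0) ^ 2 + 1/16 * (x i1 - SSCME.ptB n i1) ^ 2
            + 5779/40000 * SSCME.Rf (x - SSCME.ptB n) from by
            rw [eB0, eB1, hRB]; ring]
      exact hx2
    have hx3' : √(4225/16 * ((x i1 - 1/2) ^ 2)
          + (1/16 * x i0 ^ 2 + 240079/40000 * (SSCME.Rf x - 2 * x i2 + 1)))
        + √(1/16 * ((x i1 - 1/2) ^ 2)
          + (64 * x i0 ^ 2 + 5779/40000 * (SSCME.Rf x - 2 * x i2 + 1))) = 33/2 := by
      rw [show (4225/16 * ((x i1 - 1/2) ^ 2)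
            + (1/16 * x i0 ^ 2 + 240079/40000 * (SSCME.Rf x - 2 * x i2 + 1)) : ℝ)
          = 1/16 * (x i0 - SSCME.ptC n i0) ^ 2 + 4225/16 * (x i1 - SSCME.ptC n i1) ^ 2
            + 240079/40000 * SSCME.Rf (x - SSCME.ptC n) from by
            rw [eC0, eC1, hRC]; ring,
        show (1/16 * ((x i1 - 1/2) ^ 2)
            + (64 * x i0 ^ 2 + 5779/40000 * (SSCME.Rf x - 2 * x i2 + 1)) : ℝ)
          = 64 * (x i0 - SSCME.ptC n i0) ^ 2 + 1/16 * (x i1 - SSCME.ptC n i1) ^ 2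
            + 5779/40000 * SSCME.Rf (x - SSCME.ptC n) from by
            rw [eC0, eC1, hRC]; ring]
      exact hx3
    have hx4' : √(4225/16 * ((x i1 + 1/2) ^ 2)
          + (1/16 * x i0 ^ 2 + 240079/40000 * (SSCME.Rf x - 2 * x i2 + 1)))
        + √(1/16 * ((x i1 + 1/2) ^ 2)
          + (64 * x i0 ^ 2 + 5779/40000 * (SSCME.Rf x - 2 * x i2 + 1))) = 33/2 := by
      rw [show (4225/16 * ((x i1 + 1/2) ^ 2)
            + (1/16 * x i0 ^ 2 + 240079/40000 * (SSCME.Rf x - 2 * x i2 + 1)) : ℝ)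
          = 1/16 * (x i0 - SSCME.ptD n i0) ^ 2 + 4225/16 * (x i1 - SSCME.ptD n i1) ^ 2
            + 240079/40000 * SSCME.Rf (x - SSCME.ptD n) from by
            rw [eD0, eD1, hRD]; ring,
        show (1/16 * ((x i1 + 1/2) ^ 2)
            + (64 * x i0 ^ 2 + 5779/40000 * (SSCME.Rf x - 2 * x i2 + 1)) : ℝ)
          = 64 * (x i0 - SSCME.ptD n i0) ^ 2 + 1/16 * (x i1 - SSCME.ptD n i1) ^ 2
            + 5779/40000 * SSCME.Rf (x - SSCME.ptD n) from by
            rw [eD0, eD1, hRD]; ring]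
      exact hx4
    -- bisector arguments
    have hc1nn : (0:ℝ) ≤ 4225/16 * x i1 ^ 2 + 240079/40000 * SSCME.Rf x :=
      add_nonneg (mul_nonneg (by norm_num) (sq_nonneg _))
        (mul_nonneg (by norm_num) hS0)
    have hc2nn : (0:ℝ) ≤ 1/16 * x i1 ^ 2 + 5779/40000 * SSCME.Rf x :=
      add_nonneg (mul_nonneg (by norm_num) (sq_nonneg _))
        (mul_nonneg (by norm_num) hS0)
    have hu0 := SSCME.mono_pair3 (by norm_num : (0:ℝ) < 1/16) (by norm_num : (0:ℝ) < 64)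
      hc1nn hc2nn (sq_nonneg _) (sq_nonneg _) (hx1'.trans hx2'.symm)
    have hx00 : x i0 = 0 := by have h := hu0; ring_nf at h; linarith
    have hd1nn : (0:ℝ) ≤ 1/16 * x i0 ^ 2 + 240079/40000 * (SSCME.Rf x - 2 * x i2 + 1) :=
      add_nonneg (mul_nonneg (by norm_num) (sq_nonneg _))
        (mul_nonneg (by norm_num) hT0)
    have hd2nn : (0:ℝ) ≤ 64 * x i0 ^ 2 + 5779/40000 * (SSCME.Rf x - 2 * x i2 + 1) :=
      add_nonneg (mul_nonneg (by norm_num) (sq_nonneg _))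
        (mul_nonneg (by norm_num) hT0)
    have hu1 := SSCME.mono_pair3 (by norm_num : (0:ℝ) < 4225/16) (by norm_num : (0:ℝ) < 1/16)
      hd1nn hd2nn (sq_nonneg _) (sq_nonneg _) (hx3'.trans hx4'.symm)
    have hx10 : x i1 = 0 := by have h := hu1; ring_nf at h; linarith
    -- the two radial equations
    have hE1 : √(1/16 + 240079/40000 * SSCME.Rf x)
        + √(64 + 5779/40000 * SSCME.Rf x) = 33/2 := by
      rw [show (1/16 + 240079/40000 * SSCME.Rf x : ℝ)
          = 1/16 * ((x i0 - 1) ^ 2) + (4225/16 * x i1 ^ 2 + 240079/40000 * SSCME.Rf x)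
          from by rw [hx00, hx10]; ring,
        show (64 + 5779/40000 * SSCME.Rf x : ℝ)
          = 64 * ((x i0 - 1) ^ 2) + (1/16 * x i1 ^ 2 + 5779/40000 * SSCME.Rf x)
          from by rw [hx00, hx10]; ring]
      exact hx1'
    have hE2 : √(4225/64 + 240079/40000 * (SSCME.Rf x - 2 * x i2 + 1))
        + √(1/64 + 5779/40000 * (SSCME.Rf x - 2 * x i2 + 1)) = 33/2 := by
      rw [show (4225/64 + 240079/40000 * (SSCME.Rf x - 2 * x i2 + 1) : ℝ)
          = 4225/16 * ((x i1 - 1/2) ^ 2)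
            + (1/16 * x i0 ^ 2 + 240079/40000 * (SSCME.Rf x - 2 * x i2 + 1))
          from by rw [hx00, hx10]; ring,
        show (1/64 + 5779/40000 * (SSCME.Rf x - 2 * x i2 + 1) : ℝ)
          = 1/16 * ((x i1 - 1/2) ^ 2)
            + (64 * x i0 ^ 2 + 5779/40000 * (SSCME.Rf x - 2 * x i2 + 1))
          from by rw [hx00, hx10]; ring]
      exact hx3'
    -- bound on the radial mass
    have hSle : SSCME.Rf x ≤ 49/4 := by
      by_contra hcon
      push_neg at hcon
      have a1 : (857/100 : ℝ) < √(1/16 + 240079/40000 * SSCME.Rf x) :=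
        (Real.lt_sqrt (by norm_num)).mpr (by norm_num; linarith)
      have a2 : (81/10 : ℝ) < √(64 + 5779/40000 * SSCME.Rf x) :=
        (Real.lt_sqrt (by norm_num)).mpr (by norm_num; linarith)
      linarith
    have hsqS : √(SSCME.Rf x) ≤ 7/2 := by
      have h := Real.sqrt_le_sqrt hSle
      rwa [show (49/4:ℝ) = (7/2) ^ 2 by norm_num,
        Real.sqrt_sq (by norm_num : (0:ℝ) ≤ 7/2)] at h
    have hxi2 : -(x i2) ≤ √(SSCME.Rf x) := by
      have h1 : x i2 ^ 2 ≤ SSCME.Rf x := SSCME.sq_le_Rf x i2 rfl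
      calc -(x i2) ≤ |x i2| := neg_le_abs _
        _ = √(x i2 ^ 2) := (Real.sqrt_sq_eq_abs _).symm
        _ ≤ √(SSCME.Rf x) := Real.sqrt_le_sqrt h1
    have hTle : SSCME.Rf x - 2 * x i2 + 1 ≤ 81/4 := by linarith
    have b1 : √(4225/64 + 240079/40000 * (SSCME.Rf x - 2 * x i2 + 1)) ≤ 137/10 := by
      have harg : (4225/64 + 240079/40000 * (SSCME.Rf x - 2 * x i2 + 1) : ℝ)
          ≤ (137/10) ^ 2 := by norm_num; linarith
      calc √(4225/64 + 240079/40000 * (SSCME.Rf x - 2 * x i2 + 1))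
          ≤ √((137/10) ^ 2) := Real.sqrt_le_sqrt harg
        _ = 137/10 := Real.sqrt_sq (by norm_num)
    have b2 : √(1/64 + 5779/40000 * (SSCME.Rf x - 2 * x i2 + 1)) ≤ 172/100 := by
      have harg : (1/64 + 5779/40000 * (SSCME.Rf x - 2 * x i2 + 1) : ℝ)
          ≤ (172/100) ^ 2 := by norm_num; linarith
      calc √(1/64 + 5779/40000 * (SSCME.Rf x - 2 * x i2 + 1))
          ≤ √((172/100) ^ 2) := Real.sqrt_le_sqrt harg
        _ = 172/100 := Real.sqrt_sq (by norm_num)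
    linarith
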